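/- arXiv:1607.05547 — 2 statements merged into one kernel-verified Lean document; each statement's English description precedes it below -/
import Mathlib

section
/- For all 1 ≤ k < l < n: S(k,l) ≤ S(k,l+1), E(k,l) ≥ E(k,l+1), U(k,l) ≥ U(k,l+1), and O(k,l) ≤ O(k,l+1). -/
noncomputable section

variable {X : Type*} [MetricSpace X]

/-- Path distance between vertices `i` and `j` of the path `p₁, …, pₙ`:
the sum of the edge weights `d(p_t, p_{t+1})` for `min i j ≤ t < max i j`. -/
def pathDist (p : ℕ → X) (i j : ℕ) : ℝ :=
  ∑ t ∈ Finset.Ico (min i j) (max i j), dist (p t) (p (t + 1))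

/-- Shortest-path distance between vertices `x` and `y` in the unicyclic graph
`P̄[k,l]` obtained by adding the shortcut `(p_k, p_l)` of weight `d(p_k, p_l)`. -/
def pbar (p : ℕ → X) (k l x y : ℕ) : ℝ :=
  min (pathDist p x y)
    (min (pathDist p x k + dist (p k) (p l) + pathDist p l y)
         (pathDist p x l + dist (p k) (p l) + pathDist p k y))

/-- The length `|C[k,l]|` of the cycle `C[k,l]`. -/
def cycleLen (p : ℕ → X) (k l : ℕ) : ℝ :=
  pathDist p k l + dist (p k) (p l)

/-- The cycle distance `c_{k,l}(x,y)` for `k ≤ x, y ≤ l`. -/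
def cycDist (p : ℕ → X) (k l x y : ℕ) : ℝ :=
  min (pathDist p x y) (cycleLen p k l - pathDist p x y)

/-- `S(k,l) = max_{k ≤ x ≤ l} p̄_{k,l}(1,x)`. -/
def Sfun (p : ℕ → X) (k l : ℕ) : ℝ :=
  sSup ((fun x => pbar p k l 1 x) '' Set.Icc k l)

/-- `E(k,l) = max_{k ≤ x ≤ l} p̄_{k,l}(x,n)`. -/
def Efun (p : ℕ → X) (n k l : ℕ) : ℝ :=
  sSup ((fun x => pbar p k l x n) '' Set.Icc k l)

/-- `U(k,l) = p̄_{k,l}(1,n)`. -/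
def Ufun (p : ℕ → X) (n k l : ℕ) : ℝ :=
  pbar p k l 1 n

/-- `O(k,l) = max_{k ≤ x < y ≤ l} c_{k,l}(x,y)`. -/
def Ofun (p : ℕ → X) (k l : ℕ) : ℝ :=
  sSup {r | ∃ x y : ℕ, k ≤ x ∧ x < y ∧ y ≤ l ∧ r = cycDist p k l x y}

/-- `N(k,l) = max (S(k,l), E(k,l), U(k,l))`. -/
def Nfun (p : ℕ → X) (n k l : ℕ) : ℝ :=
  max (Sfun p k l) (max (Efun p n k l) (Ufun p n k l))

/-- `M(k,l) = max_{1 ≤ x < y ≤ n} p̄_{k,l}(x,y)`, the diameter of `P̄[k,l]`. -/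
def Mfun (p : ℕ → X) (n k l : ℕ) : ℝ :=
  sSup {r | ∃ x y : ℕ, 1 ≤ x ∧ x < y ∧ y ≤ n ∧ r = pbar p k l x y}

section aux

variable (p : ℕ → X)

lemma pd_nonneg (i j : ℕ) : 0 ≤ pathDist p i j :=
  Finset.sum_nonneg fun _ _ => dist_nonneg

lemma pd_comm (i j : ℕ) : pathDist p i j = pathDist p j i := by
  rw [pathDist, pathDist, min_comm, max_comm]

lemma pd_self (i : ℕ) : pathDist p i i = 0 := by
  simp [pathDist]

lemma pd_split {a b c : ℕ} (hab : a ≤ b) (hbc : b ≤ c) :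
    pathDist p a c = pathDist p a b + pathDist p b c := by
  unfold pathDist
  rw [min_eq_left (hab.trans hbc), max_eq_right (hab.trans hbc),
      min_eq_left hab, max_eq_right hab, min_eq_left hbc, max_eq_right hbc,
      ← Finset.sum_Ico_consecutive _ hab hbc]

lemma pd_succ (a : ℕ) : pathDist p a (a + 1) = dist (p a) (p (a + 1)) := by
  rw [pathDist, min_eq_left (Nat.le_succ a), max_eq_right (Nat.le_succ a)]
  simp

end aux

section pointwise

variable (p : ℕ → X) {k l x n : ℕ}

lemma S_mono_pt (hk : 1 ≤ k) (hkl : k < l) (hkx : k ≤ x) (hxl : x ≤ l) :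
    pbar p k l 1 x ≤ pbar p k (l + 1) 1 x := by
  have h1l : 1 ≤ l := hk.trans hkl.le
  have htri : dist (p k) (p l) ≤ dist (p k) (p (l + 1)) + dist (p l) (p (l + 1)) := by
    have := dist_triangle (p k) (p (l + 1)) (p l)
    rwa [dist_comm (p (l + 1)) (p l)] at this
  refine le_min (min_le_left _ _) (le_min ?_ ?_)
  · have h1 : pathDist p (l + 1) x = pathDist p l x + dist (p l) (p (l + 1)) := by
      rw [pd_comm p (l + 1) x, pd_split p hxl (Nat.le_succ l), pd_comm p x l, pd_succ]
    have h2 : pbar p k l 1 x ≤ pathDist p 1 k + dist (p k) (p l) + pathDist p l x :=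
      (min_le_right _ _).trans (min_le_left _ _)
    rw [h1]; linarith
  · have h1 : pathDist p 1 (l + 1) = pathDist p 1 l + dist (p l) (p (l + 1)) := by
      rw [pd_split p h1l (Nat.le_succ l), pd_succ]
    have h2 : pbar p k l 1 x ≤ pathDist p 1 l + dist (p k) (p l) + pathDist p k x :=
      (min_le_right _ _).trans (min_le_right _ _)
    rw [h1]; linarith

lemma E_mono_pt1 (hkx : k ≤ x) (hxl : x ≤ l) (hln : l + 1 ≤ n) :
    pbar p k (l + 1) x n ≤ pbar p k l x n := by
  have htri : dist (p k) (p (l + 1)) ≤ dist (p k) (p l) + dist (p l) (p (l + 1)) :=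
    dist_triangle _ _ _
  have hln' : pathDist p l n = dist (p l) (p (l + 1)) + pathDist p (l + 1) n := by
    rw [pd_split p (Nat.le_succ l) hln, pd_succ]
  refine le_min (min_le_left _ _) (le_min ?_ ?_)
  · have h2 : pbar p k (l + 1) x n
        ≤ pathDist p x k + dist (p k) (p (l + 1)) + pathDist p (l + 1) n :=
      (min_le_right _ _).trans (min_le_left _ _)
    rw [hln']; linarith
  · have h2 : pbar p k (l + 1) x n ≤ pathDist p x n := min_le_left _ _
    have h3 : pathDist p k n = pathDist p k x + pathDist p x n :=
      pd_split p hkx (hxl.trans ((Nat.le_succ l).trans hln))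
    have h4 := pd_nonneg p k x
    have h5 := pd_nonneg p x l
    have h6 := dist_nonneg (x := p k) (y := p l)
    linarith

lemma E_mono_pt2 (hkl : k < l) (hln : l + 1 ≤ n) :
    pbar p k (l + 1) (l + 1) n ≤ pbar p k l l n := by
  have h2 : pbar p k (l + 1) (l + 1) n ≤ pathDist p (l + 1) n := min_le_left _ _
  have hln' : pathDist p l n = dist (p l) (p (l + 1)) + pathDist p (l + 1) n := by
    rw [pd_split p (Nat.le_succ l) hln, pd_succ]
  have hkn : pathDist p k n = pathDist p k (l + 1) + pathDist p (l + 1) n :=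
    pd_split p (hkl.le.trans (Nat.le_succ l)) hln
  have h3 := dist_nonneg (x := p l) (y := p (l + 1))
  have h4 := dist_nonneg (x := p k) (y := p l)
  have h5 := pd_nonneg p l k
  have h6 := pd_nonneg p k (l + 1)
  have h7 := pd_self p l
  refine le_min (by linarith) (le_min (by linarith) (by rw [h7]; linarith))

lemma U_mono_pt (hk : 1 ≤ k) (hkl : k < l) (hln : l + 1 ≤ n) :
    pbar p k (l + 1) 1 n ≤ pbar p k l 1 n := by
  have htri : dist (p k) (p (l + 1)) ≤ dist (p k) (p l) + dist (p l) (p (l + 1)) :=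
    dist_triangle _ _ _
  have hln' : pathDist p l n = dist (p l) (p (l + 1)) + pathDist p (l + 1) n := by
    rw [pd_split p (Nat.le_succ l) hln, pd_succ]
  refine le_min (min_le_left _ _) (le_min ?_ ?_)
  · have h2 : pbar p k (l + 1) 1 n
        ≤ pathDist p 1 k + dist (p k) (p (l + 1)) + pathDist p (l + 1) n :=
      (min_le_right _ _).trans (min_le_left _ _)
    rw [hln']; linarith
  · have h2 : pbar p k (l + 1) 1 n ≤ pathDist p 1 n := min_le_left _ _
    have h3 : pathDist p 1 n = pathDist p 1 l + pathDist p l n :=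
      pd_split p (hk.trans hkl.le) (Nat.le_succ l |>.trans hln)
    have h4 : pathDist p k n = pathDist p k l + pathDist p l n :=
      pd_split p hkl.le (Nat.le_succ l |>.trans hln)
    have h5 := pd_nonneg p k l
    have h6 := dist_nonneg (x := p k) (y := p l)
    linarith

lemma cyc_mono_pt (hkl : k ≤ l) (y : ℕ) :
    cycDist p k l x y ≤ cycDist p k (l + 1) x y := by
  have htri : dist (p k) (p l) ≤ dist (p k) (p (l + 1)) + dist (p l) (p (l + 1)) := by
    have := dist_triangle (p k) (p (l + 1)) (p l)
    rwa [dist_comm (p (l + 1)) (p l)] at this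
  have hsplit : pathDist p k (l + 1) = pathDist p k l + dist (p l) (p (l + 1)) := by
    rw [pd_split p hkl (Nat.le_succ l), pd_succ]
  have hC : cycleLen p k l ≤ cycleLen p k (l + 1) := by
    unfold cycleLen; rw [hsplit]; linarith
  exact min_le_min le_rfl (by linarith)

end pointwise

/-- For all `1 ≤ k < l < n`: `S(k,l) ≤ S(k,l+1)`, `E(k,l) ≥ E(k,l+1)`,
`U(k,l) ≥ U(k,l+1)`, and `O(k,l) ≤ O(k,l+1)`. -/
theorem monotonicity_of_SEUO {X : Type*} [MetricSpace X]
    (n : ℕ) (hn : 2 ≤ n) (p : ℕ → X)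
    (k l : ℕ) (hk : 1 ≤ k) (hkl : k < l) (hl : l < n) :
    Sfun p k l ≤ Sfun p k (l + 1) ∧
    Efun p n k l ≥ Efun p n k (l + 1) ∧
    Ufun p n k l ≥ Ufun p n k (l + 1) ∧
    Ofun p k l ≤ Ofun p k (l + 1) := by
  have hkl1 : k ≤ l + 1 := hkl.le.trans (Nat.le_succ l)
  have hln : l + 1 ≤ n := hl
  refine ⟨?_, ?_, ?_, ?_⟩
  · -- S monotone
    have hne : ((fun x => pbar p k l 1 x) '' Set.Icc k l).Nonempty :=
      (Set.nonempty_Icc.2 hkl.le).image _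
    have hbdd : BddAbove ((fun x => pbar p k (l + 1) 1 x) '' Set.Icc k (l + 1)) :=
      ((Set.finite_Icc k (l + 1)).image _).bddAbove
    refine csSup_le hne ?_
    rintro r ⟨x, ⟨hkx, hxl⟩, rfl⟩
    refine (S_mono_pt p hk hkl hkx hxl).trans (le_csSup hbdd ?_)
    exact ⟨x, ⟨hkx, hxl.trans (Nat.le_succ l)⟩, rfl⟩
  · -- E antitone
    have hne : ((fun x => pbar p k (l + 1) x n) '' Set.Icc k (l + 1)).Nonempty :=
      (Set.nonempty_Icc.2 hkl1).image _
    have hbdd : BddAbove ((fun x => pbar p k l x n) '' Set.Icc k l) :=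
      ((Set.finite_Icc k l).image _).bddAbove
    refine csSup_le hne ?_
    rintro r ⟨x, ⟨hkx, hxl⟩, rfl⟩
    rcases Nat.lt_or_ge x (l + 1) with hx | hx
    · have hxl' : x ≤ l := Nat.lt_succ_iff.mp hx
      refine (E_mono_pt1 p hkx hxl' hln).trans (le_csSup hbdd ?_)
      exact ⟨x, ⟨hkx, hxl'⟩, rfl⟩
    · have hx' : x = l + 1 := le_antisymm hxl hx
      subst hx'
      refine (E_mono_pt2 p hkl hln).trans (le_csSup hbdd ?_)
      exact ⟨l, ⟨hkl.le, le_rfl⟩, rfl⟩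
  · exact U_mono_pt p hk hkl hln
  · -- O monotone
    have hne : {r | ∃ x y : ℕ, k ≤ x ∧ x < y ∧ y ≤ l ∧ r = cycDist p k l x y}.Nonempty :=
      ⟨cycDist p k l k l, k, l, le_rfl, hkl, le_rfl, rfl⟩
    have hbdd : BddAbove
        {r | ∃ x y : ℕ, k ≤ x ∧ x < y ∧ y ≤ l + 1 ∧ r = cycDist p k (l + 1) x y} := by
      refine ⟨cycleLen p k (l + 1), ?_⟩
      rintro r ⟨x, y, _, _, _, rfl⟩
      have h1 := pd_nonneg p x y
      exact (min_le_right _ _).trans (by linarith)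
    refine csSup_le hne ?_
    rintro r ⟨x, y, hkx, hxy, hyl, rfl⟩
    refine (cyc_mono_pt p hkl.le y).trans (le_csSup hbdd ?_)
    exact ⟨x, y, hkx, hxy, hyl.trans (Nat.le_succ l), rfl⟩
end
end

section
/- Fix 1 ≤ k < n and a real λ > 0. The set N_k = { l : k < l ≤ n, N(k,l) ≤ λ } is an interval of integers: if l_1, l_3 ∈ N_k and l_1 ≤ l_2 ≤ l_3, then l_2 ∈ N_k. -/
noncomputable section

variable {X : Type*} [MetricSpace X]

lemma pathDist_nonneg (p : ℕ → X) (i j : ℕ) : 0 ≤ pathDist p i j :=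
  Finset.sum_nonneg fun _ _ => dist_nonneg

lemma pathDist_comm (p : ℕ → X) (i j : ℕ) : pathDist p i j = pathDist p j i := by
  unfold pathDist; rw [min_comm, max_comm]

lemma pathDist_self (p : ℕ → X) (i : ℕ) : pathDist p i i = 0 := by
  simp [pathDist]

lemma pathDist_add (p : ℕ → X) {i j k : ℕ} (h1 : i ≤ j) (h2 : j ≤ k) :
    pathDist p i k = pathDist p i j + pathDist p j k := by
  unfold pathDist
  rw [min_eq_left (h1.trans h2), max_eq_right (h1.trans h2), min_eq_left h1,
    max_eq_right h1, min_eq_left h2, max_eq_right h2,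
    Finset.sum_Ico_consecutive _ h1 h2]

lemma dist_le_pathDist (p : ℕ → X) (i j : ℕ) : dist (p i) (p j) ≤ pathDist p i j := by
  rcases le_total i j with h | h
  · unfold pathDist
    rw [min_eq_left h, max_eq_right h]
    induction j, h using Nat.le_induction with
    | base => simp
    | succ j hj ih =>
      rw [Finset.sum_Ico_succ_top (by omega)]
      calc dist (p i) (p (j+1)) ≤ dist (p i) (p j) + dist (p j) (p (j+1)) :=
            dist_triangle _ _ _
        _ ≤ _ := by linarith
  · rw [dist_comm, pathDist_comm]
    unfold pathDist
    rw [min_eq_left h, max_eq_right h]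
    induction i, h using Nat.le_induction with
    | base => simp
    | succ i hi ih =>
      rw [Finset.sum_Ico_succ_top (by omega)]
      calc dist (p j) (p (i+1)) ≤ dist (p j) (p i) + dist (p i) (p (i+1)) :=
            dist_triangle _ _ _
        _ ≤ _ := by linarith

/-- Moving the far endpoint of the shortcut from `l₂` outward to `l₃` can only
increase distances from vertex `1` to a vertex `x` with `k ≤ x ≤ l₂`. -/
lemma pbar_S_mono (p : ℕ → X) {k x l₂ l₃ : ℕ} (hk : 1 ≤ k) (hkx : k ≤ x)
    (hx2 : x ≤ l₂) (h23 : l₂ ≤ l₃) :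
    pbar p k l₂ 1 x ≤ pbar p k l₃ 1 x := by
  have hd : dist (p k) (p l₂) ≤ dist (p k) (p l₃) + pathDist p l₂ l₃ := by
    have h1 := dist_triangle (p k) (p l₃) (p l₂)
    have h2 := dist_le_pathDist p l₃ l₂
    rw [pathDist_comm p l₃ l₂] at h2
    linarith
  have hx3 : pathDist p l₃ x = pathDist p l₂ x + pathDist p l₂ l₃ := by
    rw [pathDist_comm p l₃ x, pathDist_add p hx2 h23, pathDist_comm p x l₂]
  have h1l3 : pathDist p 1 l₃ = pathDist p 1 l₂ + pathDist p l₂ l₃ :=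
    pathDist_add p (hk.trans (hkx.trans hx2)) h23
  unfold pbar
  refine le_min (min_le_left _ _) (le_min ?_ ?_)
  · refine le_trans ((min_le_right _ _).trans (min_le_left _ _)) ?_
    linarith
  · refine le_trans ((min_le_right _ _).trans (min_le_right _ _)) ?_
    linarith

/-- Moving the far endpoint of the shortcut from `l₁` outward to `l₂` can only
decrease distances from a vertex `x ≤ l₁` to vertex `n`. -/
lemma pbar_E_mono (p : ℕ → X) {k x l₁ l₂ n : ℕ} (hk1 : k ≤ l₁) (hx1 : x ≤ l₁)
    (h12 : l₁ ≤ l₂) (h2n : l₂ ≤ n) :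
    pbar p k l₂ x n ≤ pbar p k l₁ x n := by
  have hd : dist (p k) (p l₂) ≤ dist (p k) (p l₁) + pathDist p l₁ l₂ := by
    have h1 := dist_triangle (p k) (p l₁) (p l₂)
    have h2 := dist_le_pathDist p l₁ l₂
    linarith
  have h1n : pathDist p l₁ n = pathDist p l₁ l₂ + pathDist p l₂ n :=
    pathDist_add p h12 h2n
  have hxn : pathDist p x n = pathDist p x l₁ + pathDist p l₁ n :=
    pathDist_add p hx1 (h12.trans h2n)
  have hkn : pathDist p k n = pathDist p k l₁ + pathDist p l₁ n :=
    pathDist_add p hk1 (h12.trans h2n)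
  have hnn := pathDist_nonneg p k l₁
  have hnd := dist_nonneg (x := p k) (y := p l₁)
  unfold pbar
  refine le_min (min_le_left _ _) (le_min ?_ ?_)
  · refine le_trans ((min_le_right _ _).trans (min_le_left _ _)) ?_
    linarith
  · refine le_trans (min_le_left _ _) ?_
    linarith

/-- With shortcut `(k, l₁)`, the distance from `l₁` to `n` is the path distance. -/
lemma pathDist_le_pbar_endpoint (p : ℕ → X) {k l₁ n : ℕ} (hk1 : k ≤ l₁) (h1n : l₁ ≤ n) :
    pathDist p l₁ n ≤ pbar p k l₁ l₁ n := by
  have hkn : pathDist p k n = pathDist p k l₁ + pathDist p l₁ n :=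
    pathDist_add p hk1 h1n
  have h1 := pathDist_nonneg p l₁ k
  have h2 := pathDist_nonneg p k l₁
  have h3 := dist_nonneg (x := p k) (y := p l₁)
  have h4 := pathDist_self p l₁
  unfold pbar
  refine le_min le_rfl (le_min (by linarith) (by rw [h4]; linarith))

/-- Fix `1 ≤ k < n` and `λ > 0`. The set
`N_k = { l : k < l ≤ n, N(k,l) ≤ λ }` is an interval of integers: if
`l₁, l₃ ∈ N_k` and `l₁ ≤ l₂ ≤ l₃`, then `l₂ ∈ N_k`. -/
theorem Nk_is_interval {X : Type*} [MetricSpace X]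
    (n : ℕ) (hn : 2 ≤ n) (p : ℕ → X)
    (k : ℕ) (hk : 1 ≤ k) (hkn : k < n) (lam : ℝ) (hlam : 0 < lam)
    (l₁ l₂ l₃ : ℕ)
    (h₁ : l₁ ∈ {l : ℕ | k < l ∧ l ≤ n ∧ Nfun p n k l ≤ lam})
    (h₃ : l₃ ∈ {l : ℕ | k < l ∧ l ≤ n ∧ Nfun p n k l ≤ lam})
    (h₁₂ : l₁ ≤ l₂) (h₂₃ : l₂ ≤ l₃) :
    l₂ ∈ {l : ℕ | k < l ∧ l ≤ n ∧ Nfun p n k l ≤ lam} := by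
  obtain ⟨hkl₁, hl₁n, hN1⟩ := h₁
  obtain ⟨hkl₃, hl₃n, hN3⟩ := h₃
  have hl₂n : l₂ ≤ n := h₂₃.trans hl₃n
  refine ⟨lt_of_lt_of_le hkl₁ h₁₂, hl₂n, ?_⟩
  have hS3 : Sfun p k l₃ ≤ lam := le_trans (le_max_left _ _) hN3
  have hE1 : Efun p n k l₁ ≤ lam :=
    le_trans (le_trans (le_max_left _ _) (le_max_right _ _)) hN1
  have hU1 : Ufun p n k l₁ ≤ lam :=
    le_trans (le_trans (le_max_right _ _) (le_max_right _ _)) hN1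
  have hbdd3 : BddAbove ((fun x => pbar p k l₃ 1 x) '' Set.Icc k l₃) :=
    ((Set.finite_Icc k l₃).image _).bddAbove
  have hbdd1 : BddAbove ((fun x => pbar p k l₁ x n) '' Set.Icc k l₁) :=
    ((Set.finite_Icc k l₁).image _).bddAbove
  refine max_le ?_ (max_le ?_ ?_)
  · -- S(k,l₂) ≤ λ
    refine Real.sSup_le ?_ hlam.le
    rintro r ⟨x, ⟨hkx, hx2⟩, rfl⟩
    calc pbar p k l₂ 1 x ≤ pbar p k l₃ 1 x := pbar_S_mono p hk hkx hx2 h₂₃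
      _ ≤ Sfun p k l₃ := le_csSup hbdd3 ⟨x, ⟨hkx, hx2.trans h₂₃⟩, rfl⟩
      _ ≤ lam := hS3
  · -- E(k,l₂) ≤ λ
    refine Real.sSup_le ?_ hlam.le
    rintro r ⟨x, ⟨hkx, hx2⟩, rfl⟩
    rcases le_total x l₁ with hxl | hxl
    · calc pbar p k l₂ x n ≤ pbar p k l₁ x n :=
            pbar_E_mono p hkl₁.le hxl h₁₂ hl₂n
        _ ≤ Efun p n k l₁ := le_csSup hbdd1 ⟨x, ⟨hkx, hxl⟩, rfl⟩
        _ ≤ lam := hE1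
    · have h1 : pbar p k l₂ x n ≤ pathDist p x n := min_le_left _ _
      have h2 : pathDist p l₁ n = pathDist p l₁ x + pathDist p x n :=
        pathDist_add p hxl (hx2.trans hl₂n)
      have h3 : pathDist p l₁ n ≤ pbar p k l₁ l₁ n :=
        pathDist_le_pbar_endpoint p hkl₁.le hl₁n
      have h4 : pbar p k l₁ l₁ n ≤ Efun p n k l₁ :=
        le_csSup hbdd1 ⟨l₁, ⟨hkl₁.le, le_refl _⟩, rfl⟩
      have h5 := pathDist_nonneg p l₁ x
      linarith
  · -- U(k,l₂) ≤ λ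
    calc Ufun p n k l₂ = pbar p k l₂ 1 n := rfl
      _ ≤ pbar p k l₁ 1 n := pbar_E_mono p hkl₁.le (hk.trans hkl₁.le) h₁₂ hl₂n
      _ ≤ lam := hU1
end
end
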